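/- For the dihedral group I_2(N) with constant multiplicity m, if q = A z^d + B z̄^d + z z̄ · p is an m-quasiinvariant homogeneous of degree d = mN + lN with 1 ≤ l ≤ m, then A = B. -/

import Mathlib

open Complex Finset

/-- coefficient assignment -/
def qiC (A B : ℂ) (P : MvPolynomial (Fin 2) ℂ) : Bool ⊕ (Fin 2 →₀ ℕ) → ℂ :=
  Sum.elim (fun b => if b then A else B) (fun v => MvPolynomial.coeff v P)

/-- frequency assignment -/
def qiW (d : ℕ) : Bool ⊕ (Fin 2 →₀ ℕ) → ℤ :=
  Sum.elim (fun b => if b then (d:ℤ) else -(d:ℤ)) (fun v => (v 0 : ℤ) - (v 1 : ℤ))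

lemma expSum_iteratedDeriv {ι : Type*} (S : Finset ι) (c : ι → ℂ) (w : ι → ℤ) (n : ℕ) :
    iteratedDeriv n (fun φ : ℝ => ∑ x ∈ S, c x * Complex.exp (w x * φ * Complex.I))
      = fun φ : ℝ => ∑ x ∈ S, c x * (w x * Complex.I) ^ n * Complex.exp (w x * φ * Complex.I) := by
  induction n with
  | zero => simp
  | succ n ih =>
    rw [iteratedDeriv_succ, ih]
    funext φ
    have hterm : ∀ x : ι, HasDerivAt
        (fun φ : ℝ => c x * (w x * Complex.I) ^ n * Complex.exp (w x * φ * Complex.I))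
        (c x * (w x * Complex.I) ^ (n+1) * Complex.exp (w x * φ * Complex.I)) φ := by
      intro x
      have h1 : HasDerivAt (fun φ : ℝ => (w x : ℂ) * φ * Complex.I) (w x * Complex.I) φ := by
        simpa using ((Complex.ofRealCLM.hasDerivAt (x := φ)).const_mul
          ((w x : ℂ))).mul_const Complex.I
      have h2 := (h1.cexp).const_mul (c x * (w x * Complex.I) ^ n)
      have e : c x * (w x * Complex.I) ^ (n+1) * Complex.exp (w x * φ * Complex.I)
          = c x * (w x * Complex.I) ^ n * (Complex.exp (w x * φ * Complex.I) * (w x * Complex.I)) := by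
        ring
      rw [e]
      exact h2
    exact (HasDerivAt.fun_sum (fun x _ => hterm x)).deriv

lemma geom_exp_sum (N : ℕ) (hN : 0 < N) (j : ℤ) (hj : (2:ℤ) ∣ j) :
    ∑ k ∈ Finset.range N, Complex.exp (j * ((Real.pi * k / N : ℝ) : ℂ) * Complex.I)
      = if (2*(N:ℤ)) ∣ j then (N:ℂ) else 0 := by
  have hπ : (Real.pi : ℂ) ≠ 0 := by exact_mod_cast Real.pi_ne_zero
  have hNC : (N:ℂ) ≠ 0 := by exact_mod_cast hN.ne'
  set ζ : ℂ := Complex.exp ((j : ℂ) * (Real.pi / N) * Complex.I) with hζ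
  have hterm : ∀ k : ℕ, Complex.exp (j * ((Real.pi * k / N : ℝ) : ℂ) * Complex.I) = ζ ^ k := by
    intro k
    rw [hζ, ← Complex.exp_nat_mul]
    congr 1
    push_cast
    ring
  rw [Finset.sum_congr rfl (fun k _ => hterm k)]
  by_cases hdvd : (2*(N:ℤ)) ∣ j
  · rw [if_pos hdvd]
    obtain ⟨u, hu⟩ := hdvd
    have hζ1 : ζ = 1 := by
      rw [hζ, hu]
      have h3 : ((2 * (N:ℤ) * u : ℤ) : ℂ) * (Real.pi / N) * Complex.I
          = (u : ℤ) * (2 * Real.pi * Complex.I) := by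
        push_cast
        field_simp
      rw [h3, Complex.exp_int_mul_two_pi_mul_I]
    simp [hζ1]
  · rw [if_neg hdvd]
    have hζne : ζ ≠ 1 := by
      intro h
      rw [hζ, Complex.exp_eq_one_iff] at h
      obtain ⟨n, hn⟩ := h
      apply hdvd
      refine ⟨n, ?_⟩
      have hπI : (Real.pi : ℂ) * Complex.I ≠ 0 := mul_ne_zero hπ Complex.I_ne_zero
      field_simp at hn
      have h4 : (j : ℂ) * (Real.pi * Complex.I) = (2*N*n) * (Real.pi * Complex.I) := by
        linear_combination ((Real.pi:ℂ) * Complex.I) * hn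
      have h5 : (j : ℂ) = 2*N*n := mul_right_cancel₀ hπI h4
      exact_mod_cast h5
    have hζN : ζ ^ N = 1 := by
      obtain ⟨u, hu⟩ := hj
      rw [hζ, ← Complex.exp_nat_mul]
      have h6 : (N:ℂ) * ((j:ℂ) * (Real.pi / N) * Complex.I)
          = (u:ℤ) * (2 * Real.pi * Complex.I) := by
        rw [hu]; push_cast; field_simp
      rw [h6, Complex.exp_int_mul_two_pi_mul_I]
    rw [geom_sum_eq hζne, hζN]
    simp

lemma qi_funeq (d : ℕ) (A B : ℂ) (P : MvPolynomial (Fin 2) ℂ) :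
    (fun φ : ℝ =>
      A * (((1:ℝ):ℂ) * Complex.exp ((φ:ℂ) * Complex.I)) ^ d
      + B * ((starRingEnd ℂ) (((1:ℝ):ℂ) * Complex.exp ((φ:ℂ) * Complex.I))) ^ d
      + (((1:ℝ):ℂ) * Complex.exp ((φ:ℂ) * Complex.I))
          * (starRingEnd ℂ) (((1:ℝ):ℂ) * Complex.exp ((φ:ℂ) * Complex.I))
          * MvPolynomial.eval
              (fun i => if i = 0 then ((1:ℝ):ℂ) * Complex.exp ((φ:ℂ) * Complex.I)
                else (starRingEnd ℂ) (((1:ℝ):ℂ) * Complex.exp ((φ:ℂ) * Complex.I))) P)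
    = fun φ : ℝ => ∑ x ∈ Finset.univ.disjSum P.support,
        qiC A B P x * Complex.exp ((qiW d x : ℂ) * φ * Complex.I) := by
  funext φ
  have hconj : (starRingEnd ℂ) (Complex.exp ((φ:ℂ) * Complex.I))
      = Complex.exp (-((φ:ℂ) * Complex.I)) := by
    rw [← Complex.exp_conj]
    congr 1
    simp
  have hpow : ∀ n : ℕ, Complex.exp ((φ:ℂ) * Complex.I) ^ n
      = Complex.exp ((n:ℂ) * φ * Complex.I) := by
    intro n; rw [← Complex.exp_nat_mul]; congr 1; ring
  have hpow' : ∀ n : ℕ, Complex.exp (-((φ:ℂ) * Complex.I)) ^ n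
      = Complex.exp (-(n:ℂ) * φ * Complex.I) := by
    intro n; rw [← Complex.exp_nat_mul]; congr 1; ring
  rw [MvPolynomial.eval_eq', Finset.sum_disjSum, Fintype.sum_bool]
  simp only [one_mul, Complex.ofReal_one, hconj, qiC, qiW, Sum.elim_inl, Sum.elim_inr,
    if_true, if_false, Bool.false_eq_true]
  have hterm : ∀ v ∈ P.support, MvPolynomial.coeff v P *
      ∏ i, (if i = 0 then Complex.exp ((φ:ℂ) * Complex.I)
        else Complex.exp (-((φ:ℂ) * Complex.I))) ^ v i
      = MvPolynomial.coeff v P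
          * Complex.exp ((((v 0 : ℤ) - (v 1 : ℤ) : ℤ):ℂ) * φ * Complex.I) := by
    intro v _
    rw [Fin.prod_univ_two, if_pos rfl, if_neg (by decide : ¬ ((1:Fin 2) = 0))]
    rw [hpow, hpow', ← Complex.exp_add]
    congr 2
    push_cast
    ring
  rw [Finset.sum_congr rfl hterm]
  rw [hpow, hpow', ← Complex.exp_add]
  have h1 : (φ:ℂ) * Complex.I + -((φ:ℂ) * Complex.I) = 0 := by ring
  rw [h1, Complex.exp_zero, one_mul]
  norm_cast

/-- If `q = A z^d + B z̄^d + z z̄ p` is an `m`-quasiinvariant of `I₂(N)` homogeneous of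
degree `d = (m+l)N` with `1 ≤ l ≤ m`, then `A = B`. -/
theorem stmt13 (N m l : ℕ) (hN : 2 ≤ N) (hl1 : 1 ≤ l) (hl2 : l ≤ m)
    (A B : ℂ) (P : MvPolynomial (Fin 2) ℂ)
    (hP : P.IsHomogeneous ((m + l) * N - 2))
    (hq : ∀ (r : ℝ) (k : ℕ), k < N → ∀ s : ℕ, 1 ≤ s → s ≤ m →
      iteratedDeriv (2*s-1)
        (fun φ : ℝ =>
          A * ((r:ℂ) * Complex.exp ((φ:ℂ) * Complex.I)) ^ ((m + l) * N)
          + B * ((starRingEnd ℂ) ((r:ℂ) * Complex.exp ((φ:ℂ) * Complex.I))) ^ ((m + l) * N)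
          + ((r:ℂ) * Complex.exp ((φ:ℂ) * Complex.I))
              * (starRingEnd ℂ) ((r:ℂ) * Complex.exp ((φ:ℂ) * Complex.I))
              * MvPolynomial.eval
                  (fun i => if i = 0 then (r:ℂ) * Complex.exp ((φ:ℂ) * Complex.I)
                    else (starRingEnd ℂ) ((r:ℂ) * Complex.exp ((φ:ℂ) * Complex.I))) P)
        (Real.pi * k / N) = 0) :
    A = B := by
  classical
  have hm1 : 1 ≤ m := hl1.trans hl2
  set d : ℕ := (m + l) * N with hd
  have hN0 : 0 < N := by omega
  have hdge : 2 * N ≤ d := by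
    rw [hd]
    exact Nat.mul_le_mul_right N (by omega)
  have hd4 : 4 ≤ d := by omega
  have hdeg : ∀ v ∈ P.support, v 0 + v 1 = d - 2 := by
    intro v hv
    have h1 := hP (MvPolynomial.mem_support_iff.mp hv)
    rw [← h1]
    simp [Finsupp.weight_apply, Finsupp.sum_fintype, Fin.sum_univ_two]
  -- Step A : derivative conditions as exponential sums
  have keyA : ∀ k : ℕ, k < N → ∀ s : ℕ, 1 ≤ s → s ≤ m →
      ∑ x ∈ Finset.univ.disjSum P.support,
        qiC A B P x * (qiW d x * Complex.I) ^ (2*s-1)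
          * Complex.exp ((qiW d x : ℂ) * ((Real.pi * k / N : ℝ):ℂ) * Complex.I) = 0 := by
    intro k hk s hs1 hs2
    have h0 := hq 1 k hk s hs1 hs2
    rw [qi_funeq d A B P, expSum_iteratedDeriv] at h0
    exact h0
  -- parity of frequencies
  have hpar : ∀ x ∈ Finset.univ.disjSum P.support, (2:ℤ) ∣ (qiW d x - d) := by
    intro x hx
    rcases x with b | v
    · rcases b
      · exact ⟨-(d:ℤ), by simp [qiW]; ring⟩
      · exact ⟨0, by simp [qiW]⟩
    · have hv : v ∈ P.support := by simpa using hx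
      have h1 := hdeg v hv
      simp only [qiW, Sum.elim_inr]
      omega
  -- Step B : filtered pure power sums vanish
  set S' : Finset (Bool ⊕ (Fin 2 →₀ ℕ)) :=
    (Finset.univ.disjSum P.support).filter (fun x => (2*(N:ℤ)) ∣ (qiW d x - d)) with hS'
  have keyB : ∀ s : ℕ, 1 ≤ s → s ≤ m →
      ∑ x ∈ S', qiC A B P x * ((qiW d x : ℤ):ℂ) ^ (2*s-1) = 0 := by
    intro s hs1 hs2
    have h1 : ∑ x ∈ Finset.univ.disjSum P.support,
        qiC A B P x * (qiW d x * Complex.I) ^ (2*s-1)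
          * (if (2*(N:ℤ)) ∣ (qiW d x - d) then (N:ℂ) else 0) = 0 := by
      have h2 : ∀ x ∈ Finset.univ.disjSum P.support,
          qiC A B P x * (qiW d x * Complex.I) ^ (2*s-1)
            * (if (2*(N:ℤ)) ∣ (qiW d x - d) then (N:ℂ) else 0)
          = ∑ k ∈ Finset.range N,
              Complex.exp ((-(d:ℤ) : ℂ) * ((Real.pi * k / N : ℝ):ℂ) * Complex.I) *
                (qiC A B P x * (qiW d x * Complex.I) ^ (2*s-1)
                  * Complex.exp ((qiW d x : ℂ) * ((Real.pi * k / N : ℝ):ℂ) * Complex.I)) := by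
        intro x hx
        rw [← geom_exp_sum N hN0 (qiW d x - d) (hpar x hx), Finset.mul_sum]
        apply Finset.sum_congr rfl
        intro k _
        have e1 : ((qiW d x - d : ℤ):ℂ) * ((Real.pi * k / N : ℝ):ℂ) * Complex.I
            = (qiW d x : ℂ) * ((Real.pi * k / N : ℝ):ℂ) * Complex.I
              + (-(d:ℤ) : ℂ) * ((Real.pi * k / N : ℝ):ℂ) * Complex.I := by
          push_cast
          ring
        rw [e1, Complex.exp_add]
        ring
      rw [Finset.sum_congr rfl h2, Finset.sum_comm]
      apply Finset.sum_eq_zero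
      intro k hk
      rw [← Finset.mul_sum, keyA k (Finset.mem_range.mp hk) s hs1 hs2, mul_zero]
    simp only [mul_ite, mul_zero] at h1
    rw [← Finset.sum_filter] at h1
    have h3 : ∑ x ∈ S', qiC A B P x * (qiW d x * Complex.I) ^ (2*s-1) * (N:ℂ)
        = ((N:ℂ) * Complex.I ^ (2*s-1)) *
            ∑ x ∈ S', qiC A B P x * ((qiW d x : ℤ):ℂ) ^ (2*s-1) := by
      rw [Finset.mul_sum]
      apply Finset.sum_congr rfl
      intro x _
      rw [mul_pow]
      ring
    rw [h3] at h1
    have hne : ((N:ℂ) * Complex.I ^ (2*s-1)) ≠ 0 :=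
      mul_ne_zero (by exact_mod_cast hN0.ne') (pow_ne_zero _ Complex.I_ne_zero)
    exact (mul_eq_zero.mp h1).resolve_left hne
  -- Step C : odd-polynomial (Lagrange) argument
  set T : ℕ := (m + l + 1) / 2 with hT
  have hTm : T ≤ m := by omega
  set a : ℕ → ℂ := fun t => (((m + l - 2*(t+1)) * N : ℕ) : ℂ)^2 with ha
  set p : Polynomial ℂ := ∏ t ∈ Finset.range (T-1), (Polynomial.X - Polynomial.C (a t)) with hp
  have hdegp : p.natDegree ≤ T - 1 := by
    calc p.natDegree ≤ ∑ t ∈ Finset.range (T-1), (Polynomial.X - Polynomial.C (a t)).natDegree :=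
          Polynomial.natDegree_prod_le _ _
      _ ≤ ∑ _t ∈ Finset.range (T-1), 1 := by
          apply Finset.sum_le_sum
          intro t _
          rw [Polynomial.natDegree_X_sub_C]
      _ = T - 1 := by simp
  have hevalp : ∀ y : ℂ, p.eval y = ∏ t ∈ Finset.range (T-1), (y - a t) := by
    intro y
    rw [hp, Polynomial.eval_prod]
    apply Finset.prod_congr rfl
    intro t _
    simp
  have keyC : ∑ x ∈ S', qiC A B P x * ((qiW d x : ℤ):ℂ)
      * p.eval (((qiW d x : ℤ):ℂ)^2) = 0 := by
    have h4 : ∀ x ∈ S', qiC A B P x * ((qiW d x : ℤ):ℂ) * p.eval (((qiW d x : ℤ):ℂ)^2)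
        = ∑ i ∈ Finset.range (p.natDegree + 1),
            p.coeff i * (qiC A B P x * ((qiW d x : ℤ):ℂ) ^ (2*(i+1)-1)) := by
      intro x _
      rw [Polynomial.eval_eq_sum_range, Finset.mul_sum]
      apply Finset.sum_congr rfl
      intro i _
      have h5 : 2*(i+1)-1 = 2*i+1 := by omega
      rw [h5]
      ring
    rw [Finset.sum_congr rfl h4, Finset.sum_comm]
    apply Finset.sum_eq_zero
    intro i hi
    have hi' : i + 1 ≤ m := by
      have := Finset.mem_range.mp hi
      omega
    rw [← Finset.mul_sum, keyB (i+1) (by omega) hi', mul_zero]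
  -- evaluate the sum via the pair {inl true, inl false}
  have hpair_ne : (Sum.inl true : Bool ⊕ (Fin 2 →₀ ℕ)) ≠ Sum.inl false := by simp
  have hsub : ({Sum.inl true, Sum.inl false} : Finset (Bool ⊕ (Fin 2 →₀ ℕ))) ⊆ S' := by
    intro x hx
    rw [hS', Finset.mem_filter]
    rcases Finset.mem_insert.mp hx with h | h
    · subst h
      refine ⟨Finset.inl_mem_disjSum.mpr (Finset.mem_univ _), ?_⟩
      simp [qiW]
    · rw [Finset.mem_singleton] at h
      subst h
      refine ⟨Finset.inl_mem_disjSum.mpr (Finset.mem_univ _), ⟨-(m+l:ℤ), ?_⟩⟩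
      simp only [qiW, Sum.elim_inl, Bool.false_eq_true, if_false]
      rw [hd]
      push_cast
      ring
  have hvanish : ∀ x ∈ S', x ∉ ({Sum.inl true, Sum.inl false} :
      Finset (Bool ⊕ (Fin 2 →₀ ℕ))) →
      qiC A B P x * ((qiW d x : ℤ):ℂ) * p.eval (((qiW d x : ℤ):ℂ)^2) = 0 := by
    intro x hx hnx
    rcases x with b | v
    · rcases b
      · exact absurd (by simp) hnx
      · exact absurd (by simp) hnx
    · rw [hS', Finset.mem_filter] at hx
      obtain ⟨hxS, hdvd⟩ := hx
      have hv : v ∈ P.support := by simpa using hxS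
      have h1 := hdeg v hv
      simp only [qiW, Sum.elim_inr] at hdvd ⊢
      set j : ℤ := (v 0 : ℤ) - (v 1 : ℤ) with hj
      by_cases hj0 : j = 0
      · rw [hj0]
        simp
      · obtain ⟨u', hu'⟩ := hdvd
        have hdz : (d:ℤ) = ((m:ℤ) + l) * N := by rw [hd]; push_cast; ring
        have hVd : (d:ℤ) = (v 0 : ℤ) + (v 1 : ℤ) + 2 := by omega
        have h2a : 2*((v 1:ℤ) + 1 + N*u') = 0 := by linear_combination -hu' + hj - hVd
        have hNu' : (N:ℤ) * u' = -((v 1:ℤ)+1) := by linarith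
        have hNz1 : (1:ℤ) ≤ (N:ℤ) := by exact_mod_cast hN0
        have hu'neg : u' ≤ -1 := by nlinarith [hNu']
        have hu'ub : -u' ≤ (m:ℤ) + l - 1 := by
          by_contra hcon
          push_neg at hcon
          have hge : (m:ℤ) + l ≤ -u' := by omega
          have := mul_le_mul_of_nonneg_right hge (by linarith : (0:ℤ) ≤ (N:ℤ))
          nlinarith [hNu']
        set e : ℤ := (m:ℤ) + l + 2*u' with he
        have hje : j = e * N := by
          rw [he]
          linear_combination hj - hVd + hdz - 2*hNu'
        have he0 : e ≠ 0 := by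
          intro h
          exact hj0 (by rw [hje, h, zero_mul])
        set en : ℕ := e.natAbs with hen
        have hkey : ∃ t : ℕ, t < T - 1 ∧ (m + l - 2*(t+1)) = en := by
          refine ⟨(m + l - en)/2 - 1, ?_, ?_⟩ <;>
          · rcases Int.natAbs_eq e with h | h <;> omega
        obtain ⟨t, ht, hte⟩ := hkey
        have hZ : j^2 = ((en * N : ℕ) : ℤ)^2 := by
          rcases Int.natAbs_eq e with h | h <;> rw [← hen] at h <;> rw [hje, h] <;> push_cast <;> ring
        have hjsq : ((j:ℤ):ℂ)^2 = (((en * N : ℕ)):ℂ)^2 := by exact_mod_cast hZ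
        have hpz : p.eval (((j:ℤ):ℂ)^2) = 0 := by
          rw [hevalp]
          apply Finset.prod_eq_zero (Finset.mem_range.mpr ht)
          rw [ha]
          simp only []
          rw [hte, hjsq]
          ring
        rw [hpz, mul_zero]
  have keyC2 : ∑ x ∈ S', qiC A B P x * ((qiW d x : ℤ):ℂ) * p.eval (((qiW d x : ℤ):ℂ)^2)
      = (A - B) * (d:ℂ) * p.eval ((d:ℂ)^2) := by
    rw [← Finset.sum_subset hsub hvanish]
    rw [Finset.sum_pair hpair_ne]
    simp only [qiC, qiW, Sum.elim_inl, if_true, if_false, Bool.false_eq_true]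
    push_cast
    ring
  rw [keyC2] at keyC
  have hpd : p.eval ((d:ℂ)^2) ≠ 0 := by
    rw [hevalp]
    rw [Finset.prod_ne_zero_iff]
    intro t ht hzero
    have hlt : (m + l - 2*(t+1)) * N < d := by
      rw [hd]
      exact (Nat.mul_lt_mul_right hN0).mpr (by omega)
    have h7 : ((((m+l-2*(t+1))*N : ℕ)):ℂ)^2 = ((d:ℕ):ℂ)^2 := by
      rw [ha] at hzero
      simp only [] at hzero
      linear_combination -hzero
    have h8 : ((((m+l-2*(t+1))*N : ℕ))^2 : ℕ) = (d^2 : ℕ) := by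
      exact_mod_cast h7
    have h9 : ((m+l-2*(t+1))*N : ℕ) = d := Nat.pow_left_injective (by omega) h8
    omega
  have hdne : ((d:ℕ):ℂ) ≠ 0 := by
    exact_mod_cast (by omega : d ≠ 0)
  have hAB : A - B = 0 := by
    have h10 := (mul_eq_zero.mp keyC).resolve_right hpd
    have h11 := (mul_eq_zero.mp h10).resolve_right hdne
    exact h11
  exact sub_eq_zero.mp hAB
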